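/- For all real numbers R, ρ, λ with 1 ≤ ρ ≤ R and −1 < λ ≤ 1, one has (R² − λ) log(R/ρ) + λ(R² − ρ²)/ρ² ≥ 0. -/

import Mathlib

open MeasureTheory Filter Set Topology
open scoped ENNReal

noncomputable section

/-- The round annulus `A(r,R) = {z : r < |z| < R}`. -/
def ann (r R : ℝ) : Set ℂ := {z : ℂ | r < norm z ∧ norm z < R}

/-- The Laplacian of `h : ℂ → ℂ`, viewed as a function of two real variables. -/
def lap (h : ℂ → ℂ) (z : ℂ) : ℂ :=
  fderiv ℝ (fun w => fderiv ℝ h w 1) z 1 +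
    fderiv ℝ (fun w => fderiv ℝ h w Complex.I) z Complex.I

/-- A complex-valued harmonic function on a set (real and imaginary parts harmonic). -/
def HarmOn (h : ℂ → ℂ) (s : Set ℂ) : Prop :=
  ContDiffOn ℝ 2 h s ∧ ∀ z ∈ s, lap h z = 0

/-- Cauchy–Riemann derivative `h_z`. -/
def dz (h : ℂ → ℂ) (z : ℂ) : ℂ :=
  (fderiv ℝ h z 1 - Complex.I * fderiv ℝ h z Complex.I) / 2

/-- Cauchy–Riemann derivative `h_z̄`. -/
def dzbar (h : ℂ → ℂ) (z : ℂ) : ℂ :=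
  (fderiv ℝ h z 1 + Complex.I * fderiv ℝ h z Complex.I) / 2

/-- Jacobian determinant `J(z,h) = |h_z|² − |h_z̄|²`. -/
def jac (h : ℂ → ℂ) (z : ℂ) : ℝ := norm (dz h z) ^ 2 - norm (dzbar h z) ^ 2

/-- Squared Hilbert–Schmidt norm `‖Dh‖² = 2(|h_z|² + |h_z̄|²) = |h_x|² + |h_y|²`. -/
def Dn2 (h : ℂ → ℂ) (z : ℂ) : ℝ :=
  norm (fderiv ℝ h z 1) ^ 2 + norm (fderiv ℝ h z Complex.I) ^ 2

/-- Cluster set of `h` at the inner circle of the annulus `A(r,R)`. -/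
def clusterInner (h : ℂ → ℂ) (r R : ℝ) : Set ℂ :=
  ⋂ ρ ∈ Set.Ioo r R, closure (h '' ann r ρ)

/-- `h` is an orientation-preserving harmonic homeomorphism of `A(r,R)` onto `T`
whose cluster set at the inner circle of `A(r,R)` is `ibdry` (the inner boundary of `T`). -/
def IsHarmHomeo (h : ℂ → ℂ) (r R : ℝ) (T : Set ℂ) (ibdry : Set ℂ) : Prop :=
  HarmOn h (ann r R) ∧ (∀ z ∈ ann r R, 0 < jac h z) ∧
    Set.BijOn h (ann r R) T ∧ clusterInner h r R = ibdry

/-- Circular mean `⨍_{C_ρ} f`. -/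
def cAvg (f : ℂ → ℂ) (ρ : ℝ) : ℂ :=
  (2 * Real.pi)⁻¹ • ∫ θ in (0:ℝ)..(2 * Real.pi), f ((ρ : ℂ) * Complex.exp ((θ : ℂ) * Complex.I))

/-- Quadratic mean `U(ρ) = ⨍_{C_ρ} |h|²`. -/
def qMean (h : ℂ → ℂ) (ρ : ℝ) : ℝ :=
  (2 * Real.pi)⁻¹ * ∫ θ in (0:ℝ)..(2 * Real.pi),
    norm (h ((ρ : ℂ) * Complex.exp ((θ : ℂ) * Complex.I))) ^ 2

/-- Variance `V(ρ) = ⨍_{C_ρ}|h|² − |⨍_{C_ρ} h|²`. -/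
def vVar (h : ℂ → ℂ) (ρ : ℝ) : ℝ := qMean h ρ - norm (cAvg h ρ) ^ 2

/-- Circular mean of the radial (normal) derivative, `⨍_{C_ρ} ∂h/∂ρ`. -/
def rAvg (h : ℂ → ℂ) (ρ : ℝ) : ℂ :=
  (2 * Real.pi)⁻¹ • ∫ θ in (0:ℝ)..(2 * Real.pi),
    fderiv ℝ h ((ρ : ℂ) * Complex.exp ((θ : ℂ) * Complex.I)) (Complex.exp ((θ : ℂ) * Complex.I))

/-- Mean outer radius `R_*(h) = lim_{ρ↗R} (⨍_{C_ρ}|h|²)^{1/2}`, as a value in `[0,∞]`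
(the limit exists since the quadratic means are increasing; we use the `limsup`). -/
def Rstar (h : ℂ → ℂ) (R : ℝ) : ℝ≥0∞ :=
  Filter.limsup (fun ρ => ENNReal.ofReal (Real.sqrt (qMean h ρ))) (𝓝[<] R)

/-- The ordinary differential operator `L^λ`. -/
def Lop (l : ℝ) (F : ℝ → ℝ) (ρ : ℝ) : ℝ :=
  deriv (deriv F) ρ + ((3 * l - ρ ^ 2) / (ρ * (ρ ^ 2 + l))) * deriv F ρ
    - (8 * l / (ρ ^ 2 + l) ^ 2) * F ρ

/-- The extremal mapping `h^λ(z) = (1/(1+λ))(z + λ/z̄)`. -/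
def hext (l : ℝ) (z : ℂ) : ℂ := (1 / (1 + (l : ℂ))) * (z + (l : ℂ) / (starRingEnd ℂ z))

/-- `A` is a doubly connected domain whose inner boundary is the unit circle:
its complement is the disjoint union of the closed unit disk and an unbounded
closed connected set. -/
def DCUnit (A : Set ℂ) : Prop :=
  IsOpen A ∧ IsConnected A ∧
    ∃ G : Set ℂ, IsClosed G ∧ IsConnected G ∧ ¬ Bornology.IsBounded G ∧
      Disjoint (Metric.closedBall (0 : ℂ) 1) G ∧ Aᶜ = Metric.closedBall (0 : ℂ) 1 ∪ G

/-- Circular mean `⨍_{C_ρ} Im(h̄ · h_θ)` where `h_θ` is the angular derivative. -/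
def angMean (h : ℂ → ℂ) (ρ : ℝ) : ℝ :=
  (2 * Real.pi)⁻¹ * ∫ θ in (0:ℝ)..(2 * Real.pi),
    (starRingEnd ℂ (h ((ρ : ℂ) * Complex.exp ((θ : ℂ) * Complex.I))) *
      fderiv ℝ h ((ρ : ℂ) * Complex.exp ((θ : ℂ) * Complex.I))
        (Complex.I * ((ρ : ℂ) * Complex.exp ((θ : ℂ) * Complex.I)))).im


lemma key_deriv {y : ℝ} (hy : 0 < y) :
    HasDerivAt (fun y : ℝ => (y ^ 2 + 1) * Real.log y - y ^ 2 + 1)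
      (2 * y * Real.log y + (y ^ 2 + 1) / y - 2 * y) y := by
  have h1 : HasDerivAt (fun y : ℝ => y ^ 2 + 1) (2 * y) y := by
    simpa using ((hasDerivAt_pow 2 y).add_const 1)
  have h2 : HasDerivAt Real.log (1 / y) y := by
    simpa [one_div] using Real.hasDerivAt_log (ne_of_gt hy)
  have h3 := (h1.mul h2).sub ((hasDerivAt_pow 2 y)) |>.add_const 1
  exact h3.congr_deriv (by norm_num [div_eq_mul_inv])

lemma key_aux {x : ℝ} (hx : 1 ≤ x) : x ^ 2 - 1 ≤ (x ^ 2 + 1) * Real.log x := by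
  set f : ℝ → ℝ := fun y => (y ^ 2 + 1) * Real.log y - y ^ 2 + 1 with hf
  have hmono : MonotoneOn f (Set.Ici 1) := by
    apply monotoneOn_of_deriv_nonneg (convex_Ici 1)
    · intro y hy
      exact ((key_deriv (lt_of_lt_of_le one_pos hy)).continuousAt).continuousWithinAt
    · intro y hy
      rw [interior_Ici] at hy
      exact (key_deriv (lt_trans one_pos hy)).differentiableAt.differentiableWithinAt
    · intro y hy
      rw [interior_Ici] at hy
      have hy0 : (0:ℝ) < y := lt_trans one_pos hy
      rw [(key_deriv hy0).deriv]
      -- 2 log y ≥ 1 - 1/y^2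
      have hlog : Real.log ((y ^ 2)⁻¹) ≤ (y ^ 2)⁻¹ - 1 :=
        Real.log_le_sub_one_of_pos (by positivity)
      rw [Real.log_inv, Real.log_pow] at hlog
      have h2 : 1 - (y ^ 2)⁻¹ ≤ 2 * Real.log y := by push_cast at hlog; linarith
      have hyne : y ≠ 0 := ne_of_gt hy0
      have : 2 * y * Real.log y + (y ^ 2 + 1) / y - 2 * y
          ≥ y * (1 - (y^2)⁻¹) + (y ^ 2 + 1) / y - 2 * y := by
        nlinarith [mul_le_mul_of_nonneg_left h2 (le_of_lt hy0)]
      have heq : y * (1 - (y^2)⁻¹) + (y ^ 2 + 1) / y - 2 * y = 0 := by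
        field_simp
        ring
      linarith
  have := hmono (Set.mem_Ici.2 le_rfl) (Set.mem_Ici.2 hx) hx
  simp only [hf, Real.log_one] at this
  nlinarith [this]

/-- elementary inequality (8.15). -/
theorem stmt18 (R ρ l : ℝ) (h1 : 1 ≤ ρ) (h2 : ρ ≤ R) (h3 : -1 < l) (h4 : l ≤ 1) :
    0 ≤ (R ^ 2 - l) * Real.log (R / ρ) + l * (R ^ 2 - ρ ^ 2) / ρ ^ 2 := by
  have hρ : (0:ℝ) < ρ := lt_of_lt_of_le one_pos h1
  have hR : (0:ℝ) < R := lt_of_lt_of_le hρ h2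
  have hx : (1:ℝ) ≤ R / ρ := (one_le_div hρ).2 h2
  have hL : 0 ≤ Real.log (R / ρ) := Real.log_nonneg hx
  have hRρ : ρ ^ 2 ≤ R ^ 2 := by nlinarith
  rcases le_or_gt 0 l with hl | hl
  · apply add_nonneg
    · apply mul_nonneg _ hL
      nlinarith
    · apply div_nonneg (mul_nonneg hl (by linarith)) (by positivity)
  · have hkey := key_aux hx
    have hdiv : l * (R ^ 2 - ρ ^ 2) / ρ ^ 2 = l * ((R / ρ) ^ 2 - 1) := by
      field_simp
    rw [hdiv]
    have hstep : l * (((R / ρ) ^ 2 + 1) * Real.log (R / ρ)) ≤ l * ((R / ρ) ^ 2 - 1) :=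
      mul_le_mul_of_nonpos_left hkey (le_of_lt hl)
    have hx2 : (R / ρ) ^ 2 ≤ R ^ 2 := by
      rw [div_pow]
      rw [div_le_iff₀ (by positivity)]
      nlinarith [mul_le_mul_of_nonneg_left (show (1:ℝ) ≤ ρ^2 by nlinarith) (sq_nonneg R)]
    have hcoef : 0 ≤ R ^ 2 + l * (R / ρ) ^ 2 := by nlinarith [sq_nonneg (R/ρ)]
    nlinarith [mul_nonneg hcoef hL]


end
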